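/- In the ReLU-network setting, the second moment of the gradient estimator is finite: for every θ ∈ Θ, E_z[‖∇_θ f(θ, z)‖²] < ∞, where ∇_θ f(θ, z) is the gradient of the loss with respect to all weights and biases for fixed input z (defined for a.e. z). -/

import Mathlib

open MeasureTheory
open scoped BigOperators

noncomputable section

/-- Parameter space of an `n`-layer fully connected network with layer widths `κ`:
for each layer `i` a weight matrix `W_i ∈ ℝ^{κ(i+1) × κ i}` and a bias `b_i ∈ ℝ^{κ(i+1)}`. -/
abbrev NNParams (κ : ℕ → ℕ) (n : ℕ) :=
  (i : Fin n) → ((Fin (κ (i.1 + 1)) → Fin (κ i.1) → ℝ) × (Fin (κ (i.1 + 1)) → ℝ))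

/-- The layers of the ReLU network: `x₀ = z`, `x_{i+1} = max(0, W_{i+1} x_i + b_{i+1})`
entrywise for the hidden layers `i + 1 ≤ n - 1`, and the affine output layer
`x_n = W_n x_{n-1} + b_n` (junk value `0` beyond layer `n`). -/
def reluNet (κ : ℕ → ℕ) (n : ℕ) (θ : NNParams κ n) (z : Fin (κ 0) → ℝ) :
    (i : ℕ) → Fin (κ i) → ℝ
  | 0 => z
  | (i + 1) =>
    if h : i < n then
      fun j =>
        let pre := (∑ l, (θ ⟨i, h⟩).1 j l * reluNet κ n θ z i l) + (θ ⟨i, h⟩).2 j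
        if i + 2 ≤ n then max 0 pre else pre
    else 0

section lemmas
variable {κ : ℕ → ℕ} {n : ℕ}

lemma reluNet_succ (θ : NNParams κ n) (z : Fin (κ 0) → ℝ) {i : ℕ} (h : i < n)
    (j : Fin (κ (i + 1))) :
    reluNet κ n θ z (i + 1) j =
      if i + 2 ≤ n then
        max 0 ((∑ l, (θ ⟨i, h⟩).1 j l * reluNet κ n θ z i l) + (θ ⟨i, h⟩).2 j)
      else ((∑ l, (θ ⟨i, h⟩).1 j l * reluNet κ n θ z i l) + (θ ⟨i, h⟩).2 j) := by
  simp [reluNet, h]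

lemma reluNet_succ_of_ge (θ : NNParams κ n) (z : Fin (κ 0) → ℝ) {i : ℕ} (h : ¬ i < n)
    (j : Fin (κ (i + 1))) : reluNet κ n θ z (i + 1) j = 0 := by
  simp [reluNet, h]

lemma continuous_reluNet_param (z : Fin (κ 0) → ℝ) (i : ℕ) (j : Fin (κ i)) :
    Continuous fun θ' : NNParams κ n => reluNet κ n θ' z i j := by
  induction i with
  | zero => exact continuous_const
  | succ i IH =>
    by_cases h : i < n
    · have hW : ∀ l : Fin (κ i), Continuous fun θ' : NNParams κ n => (θ' ⟨i, h⟩).1 j l :=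
        fun l => (continuous_apply l).comp ((continuous_apply j).comp
          (continuous_fst.comp (continuous_apply (⟨i, h⟩ : Fin n))))
      have hb : Continuous fun θ' : NNParams κ n => (θ' ⟨i, h⟩).2 j :=
        (continuous_apply j).comp (continuous_snd.comp (continuous_apply (⟨i, h⟩ : Fin n)))
      have hpre : Continuous fun θ' : NNParams κ n =>
          (∑ l, (θ' ⟨i, h⟩).1 j l * reluNet κ n θ' z i l) + (θ' ⟨i, h⟩).2 j :=
        (continuous_finset_sum _ fun l _ => (hW l).mul (IH l)).add hb
      simp only [reluNet_succ _ _ h]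
      split
      · exact continuous_const.max hpre
      · exact hpre
    · simp only [reluNet_succ_of_ge _ _ h]
      exact continuous_const

lemma continuous_reluNet_input (θ : NNParams κ n) (i : ℕ) (j : Fin (κ i)) :
    Continuous fun z : Fin (κ 0) → ℝ => reluNet κ n θ z i j := by
  induction i with
  | zero => exact continuous_apply j
  | succ i IH =>
    by_cases h : i < n
    · have hpre : Continuous fun z : Fin (κ 0) → ℝ =>
          (∑ l, (θ ⟨i, h⟩).1 j l * reluNet κ n θ z i l) + (θ ⟨i, h⟩).2 j :=
        (continuous_finset_sum _ fun l _ => continuous_const.mul (IH l)).add continuous_const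
      simp only [reluNet_succ _ _ h]
      split
      · exact continuous_const.max hpre
      · exact hpre
    · simp only [reluNet_succ_of_ge _ _ h]
      exact continuous_const

end lemmas

section lemmas2
variable {κ : ℕ → ℕ} {n : ℕ}

lemma W_entry_le (θ' : NNParams κ n) (i : Fin n) (j : Fin (κ (i.1 + 1))) (l : Fin (κ i.1)) :
    |(θ' i).1 j l| ≤ ‖θ'‖ := by
  calc |(θ' i).1 j l| = ‖(θ' i).1 j l‖ := rfl
    _ ≤ ‖(θ' i).1 j‖ := norm_le_pi_norm _ l
    _ ≤ ‖(θ' i).1‖ := norm_le_pi_norm _ j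
    _ ≤ ‖θ' i‖ := norm_fst_le _
    _ ≤ ‖θ'‖ := norm_le_pi_norm _ i

lemma b_entry_le (θ' : NNParams κ n) (i : Fin n) (j : Fin (κ (i.1 + 1))) :
    |(θ' i).2 j| ≤ ‖θ'‖ := by
  calc |(θ' i).2 j| = ‖(θ' i).2 j‖ := rfl
    _ ≤ ‖(θ' i).2‖ := norm_le_pi_norm _ j
    _ ≤ ‖θ' i‖ := norm_snd_le _
    _ ≤ ‖θ'‖ := norm_le_pi_norm _ i

lemma abs_max_zero_le (a : ℝ) : |max 0 a| ≤ |a| := by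
  rw [abs_of_nonneg (le_max_left 0 a)]
  exact max_le (abs_nonneg a) (le_abs_self a)

lemma norm_of_mem_ball {θ θ' : NNParams κ n} (h : θ' ∈ Metric.closedBall θ 1) :
    ‖θ'‖ ≤ ‖θ‖ + 1 := by
  have := Metric.mem_closedBall.1 h
  rw [dist_eq_norm] at this
  have h2 := norm_sub_norm_le θ' θ
  linarith

/-- growth bound for the layers, uniform over the unit ball around θ. -/
lemma reluNet_bound (θ : NNParams κ n) (i : ℕ) :
    ∃ A : ℝ, 0 ≤ A ∧ ∀ (z : Fin (κ 0) → ℝ), ∀ θ' ∈ Metric.closedBall θ 1, ∀ j : Fin (κ i),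
      |reluNet κ n θ' z i j| ≤ A * (1 + ‖z‖) := by
  induction i with
  | zero =>
    refine ⟨1, zero_le_one, fun z θ' _ j => ?_⟩
    have : |z j| ≤ ‖z‖ := norm_le_pi_norm z j
    simp only [reluNet]
    linarith [norm_nonneg z]
  | succ i IH =>
    obtain ⟨A, hA0, hA⟩ := IH
    set C : ℝ := ‖θ‖ + 1 with hC
    have hC0 : 0 ≤ C := by positivity
    refine ⟨C * (κ i * A + 1), by positivity, fun z θ' hθ' j => ?_⟩
    have hz1 : (0:ℝ) < 1 + ‖z‖ := by positivity
    by_cases h : i < n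
    · have hpre : |(∑ l, (θ' ⟨i, h⟩).1 j l * reluNet κ n θ' z i l) + (θ' ⟨i, h⟩).2 j| ≤
          C * (κ i * A + 1) * (1 + ‖z‖) := by
        have hsum : |∑ l, (θ' ⟨i, h⟩).1 j l * reluNet κ n θ' z i l| ≤
            (κ i : ℝ) * (C * (A * (1 + ‖z‖))) := by
          calc |∑ l, (θ' ⟨i, h⟩).1 j l * reluNet κ n θ' z i l|
              ≤ ∑ l, |(θ' ⟨i, h⟩).1 j l * reluNet κ n θ' z i l| :=
                Finset.abs_sum_le_sum_abs _ _
            _ ≤ ∑ _l : Fin (κ i), C * (A * (1 + ‖z‖)) := by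
                refine Finset.sum_le_sum fun l _ => ?_
                rw [abs_mul]
                exact mul_le_mul ((W_entry_le θ' ⟨i, h⟩ j l).trans (norm_of_mem_ball hθ'))
                  (hA z θ' hθ' l) (abs_nonneg _) hC0
            _ = (κ i : ℝ) * (C * (A * (1 + ‖z‖))) := by
                simp [Finset.sum_const, mul_comm]
        have hb : |(θ' ⟨i, h⟩).2 j| ≤ C := (b_entry_le θ' ⟨i, h⟩ j).trans (norm_of_mem_ball hθ')
        have h1z : (1:ℝ) ≤ 1 + ‖z‖ := by linarith [norm_nonneg z]
        have := (abs_add_le _ _).trans (add_le_add hsum hb)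
        have hCle : C ≤ C * (1 + ‖z‖) := le_mul_of_one_le_right hC0 h1z
        nlinarith [Nat.cast_nonneg (α := ℝ) (κ i), mul_nonneg (mul_nonneg hC0 hA0) hz1.le]
      rw [reluNet_succ _ _ h]
      split
      · exact (abs_max_zero_le _).trans hpre
      · exact hpre
    · rw [reluNet_succ_of_ge _ _ h]
      simp only [abs_zero]
      positivity
end lemmas2

section lemmas3
variable {κ : ℕ → ℕ} {n : ℕ}

lemma W_entry_sub_le (θ₁ θ₂ : NNParams κ n) (i : Fin n) (j : Fin (κ (i.1 + 1)))
    (l : Fin (κ i.1)) : |(θ₁ i).1 j l - (θ₂ i).1 j l| ≤ ‖θ₁ - θ₂‖ := by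
  have h := W_entry_le (θ₁ - θ₂) i j l
  simp only [Pi.sub_apply, Prod.fst_sub] at h
  exact h

lemma b_entry_sub_le (θ₁ θ₂ : NNParams κ n) (i : Fin n) (j : Fin (κ (i.1 + 1))) :
    |(θ₁ i).2 j - (θ₂ i).2 j| ≤ ‖θ₁ - θ₂‖ := by
  have h := b_entry_le (θ₁ - θ₂) i j
  simp only [Pi.sub_apply, Prod.snd_sub] at h
  exact h

/-- Lipschitz (in the parameter) bound for the layers, uniform over the unit ball around θ. -/
lemma reluNet_lip (θ : NNParams κ n) (i : ℕ) :
    ∃ L : ℝ, 0 ≤ L ∧ ∀ (z : Fin (κ 0) → ℝ), ∀ θ₁ ∈ Metric.closedBall θ 1,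
      ∀ θ₂ ∈ Metric.closedBall θ 1, ∀ j : Fin (κ i),
      |reluNet κ n θ₁ z i j - reluNet κ n θ₂ z i j| ≤ L * (1 + ‖z‖) * ‖θ₁ - θ₂‖ := by
  induction i with
  | zero =>
    refine ⟨0, le_refl _, fun z θ₁ _ θ₂ _ j => ?_⟩
    simp only [reluNet, sub_self, abs_zero, zero_mul]
    exact le_refl 0
  | succ i IH =>
    obtain ⟨L, hL0, hL⟩ := IH
    obtain ⟨A, hA0, hA⟩ := reluNet_bound θ i
    set C : ℝ := ‖θ‖ + 1 with hC
    have hC0 : 0 ≤ C := by positivity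
    refine ⟨(κ i : ℝ) * (C * L + A) + 1, by positivity, fun z θ₁ hθ₁ θ₂ hθ₂ j => ?_⟩
    have hz1 : (0:ℝ) < 1 + ‖z‖ := by positivity
    have h1z : (1:ℝ) ≤ 1 + ‖z‖ := by linarith [norm_nonneg z]
    set d : ℝ := ‖θ₁ - θ₂‖ with hd
    have hd0 : 0 ≤ d := norm_nonneg _
    by_cases h : i < n
    · have hpre : |((∑ l, (θ₁ ⟨i, h⟩).1 j l * reluNet κ n θ₁ z i l) + (θ₁ ⟨i, h⟩).2 j) -
          ((∑ l, (θ₂ ⟨i, h⟩).1 j l * reluNet κ n θ₂ z i l) + (θ₂ ⟨i, h⟩).2 j)| ≤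
          ((κ i : ℝ) * (C * L + A) + 1) * (1 + ‖z‖) * d := by
        have hterm : ∀ l : Fin (κ i),
            |(θ₁ ⟨i, h⟩).1 j l * reluNet κ n θ₁ z i l -
              (θ₂ ⟨i, h⟩).1 j l * reluNet κ n θ₂ z i l| ≤
            (C * L + A) * (1 + ‖z‖) * d := by
          intro l
          have e : (θ₁ ⟨i, h⟩).1 j l * reluNet κ n θ₁ z i l -
              (θ₂ ⟨i, h⟩).1 j l * reluNet κ n θ₂ z i l =
              (θ₁ ⟨i, h⟩).1 j l * (reluNet κ n θ₁ z i l - reluNet κ n θ₂ z i l) +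
              ((θ₁ ⟨i, h⟩).1 j l - (θ₂ ⟨i, h⟩).1 j l) * reluNet κ n θ₂ z i l := by ring
          rw [e]
          have h1 : |(θ₁ ⟨i, h⟩).1 j l * (reluNet κ n θ₁ z i l - reluNet κ n θ₂ z i l)| ≤
              C * (L * (1 + ‖z‖) * d) := by
            rw [abs_mul]
            exact mul_le_mul ((W_entry_le θ₁ ⟨i, h⟩ j l).trans (norm_of_mem_ball hθ₁))
              (hL z θ₁ hθ₁ θ₂ hθ₂ l) (abs_nonneg _) hC0
          have h2 : |((θ₁ ⟨i, h⟩).1 j l - (θ₂ ⟨i, h⟩).1 j l) * reluNet κ n θ₂ z i l| ≤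
              d * (A * (1 + ‖z‖)) := by
            rw [abs_mul]
            exact mul_le_mul (W_entry_sub_le θ₁ θ₂ ⟨i, h⟩ j l) (hA z θ₂ hθ₂ l)
              (abs_nonneg _) hd0
          calc _ ≤ _ := abs_add_le _ _
            _ ≤ C * (L * (1 + ‖z‖) * d) + d * (A * (1 + ‖z‖)) := add_le_add h1 h2
            _ = (C * L + A) * (1 + ‖z‖) * d := by ring
        have hsum : |∑ l, ((θ₁ ⟨i, h⟩).1 j l * reluNet κ n θ₁ z i l -
            (θ₂ ⟨i, h⟩).1 j l * reluNet κ n θ₂ z i l)| ≤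
            (κ i : ℝ) * ((C * L + A) * (1 + ‖z‖) * d) := by
          calc _ ≤ _ := Finset.abs_sum_le_sum_abs _ Finset.univ
            _ ≤ ∑ _l : Fin (κ i), (C * L + A) * (1 + ‖z‖) * d :=
                Finset.sum_le_sum fun l _ => hterm l
            _ = (κ i : ℝ) * ((C * L + A) * (1 + ‖z‖) * d) := by
                simp [Finset.sum_const, mul_comm]
        have hb : |(θ₁ ⟨i, h⟩).2 j - (θ₂ ⟨i, h⟩).2 j| ≤ d := b_entry_sub_le θ₁ θ₂ ⟨i, h⟩ j
        have e2 : ((∑ l, (θ₁ ⟨i, h⟩).1 j l * reluNet κ n θ₁ z i l) + (θ₁ ⟨i, h⟩).2 j) -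
            ((∑ l, (θ₂ ⟨i, h⟩).1 j l * reluNet κ n θ₂ z i l) + (θ₂ ⟨i, h⟩).2 j) =
            (∑ l, ((θ₁ ⟨i, h⟩).1 j l * reluNet κ n θ₁ z i l -
              (θ₂ ⟨i, h⟩).1 j l * reluNet κ n θ₂ z i l)) +
            ((θ₁ ⟨i, h⟩).2 j - (θ₂ ⟨i, h⟩).2 j) := by
          rw [Finset.sum_sub_distrib]; ring
        rw [e2]
        have hdle : d ≤ (1 + ‖z‖) * d := le_mul_of_one_le_left hd0 h1z
        calc _ ≤ _ := abs_add_le _ _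
          _ ≤ (κ i : ℝ) * ((C * L + A) * (1 + ‖z‖) * d) + d := add_le_add hsum hb
          _ ≤ ((κ i : ℝ) * (C * L + A) + 1) * (1 + ‖z‖) * d := by nlinarith
      rw [reluNet_succ _ _ h, reluNet_succ _ _ h]
      split
      · calc |max 0 _ - max 0 _| ≤ _ := by
              rw [max_comm 0 _, max_comm 0 _]; exact abs_max_sub_max_le_abs _ _ _
          _ ≤ _ := hpre
      · exact hpre
    · rw [reluNet_succ_of_ge _ _ h, reluNet_succ_of_ge _ _ h]
      simp only [sub_zero, abs_zero]
      positivity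
end lemmas3

section lemmas4
variable {κ : ℕ → ℕ} {n : ℕ}

lemma differentiableAt_reluNet (θ : NNParams κ n) (z : Fin (κ 0) → ℝ)
    (hz : ∀ (i : ℕ) (h : i < n), i + 2 ≤ n → ∀ j : Fin (κ (i + 1)),
      (∑ l, (θ ⟨i, h⟩).1 j l * reluNet κ n θ z i l) + (θ ⟨i, h⟩).2 j ≠ 0)
    (i : ℕ) (j : Fin (κ i)) :
    DifferentiableAt ℝ (fun θ' : NNParams κ n => reluNet κ n θ' z i j) θ := by
  induction i with
  | zero => exact differentiableAt_const _
  | succ i IH =>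
    by_cases h : i < n
    · have hWd : ∀ l : Fin (κ i),
          DifferentiableAt ℝ (fun θ' : NNParams κ n => (θ' ⟨i, h⟩).1 j l) θ := by
        intro l
        have h1 : DifferentiableAt ℝ (fun θ' : NNParams κ n => θ' ⟨i, h⟩) θ :=
          (ContinuousLinearMap.proj (R := ℝ)
            (φ := fun i : Fin n => (Fin (κ (i.1 + 1)) → Fin (κ i.1) → ℝ) × (Fin (κ (i.1 + 1)) → ℝ))
            ⟨i, h⟩).differentiableAt
        have h2 := h1.fst
        have h3 := (ContinuousLinearMap.proj (R := ℝ)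
          (φ := fun _ : Fin (κ (i + 1)) => Fin (κ i) → ℝ) j).differentiableAt.comp θ h2
        exact (ContinuousLinearMap.proj (R := ℝ)
          (φ := fun _ : Fin (κ i) => ℝ) l).differentiableAt.comp θ h3
      have hbd : DifferentiableAt ℝ (fun θ' : NNParams κ n => (θ' ⟨i, h⟩).2 j) θ := by
        have h1 : DifferentiableAt ℝ (fun θ' : NNParams κ n => θ' ⟨i, h⟩) θ :=
          (ContinuousLinearMap.proj (R := ℝ)
            (φ := fun i : Fin n => (Fin (κ (i.1 + 1)) → Fin (κ i.1) → ℝ) × (Fin (κ (i.1 + 1)) → ℝ))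
            ⟨i, h⟩).differentiableAt
        exact (ContinuousLinearMap.proj (R := ℝ)
          (φ := fun _ : Fin (κ (i + 1)) => ℝ) j).differentiableAt.comp θ h1.snd
      set p : NNParams κ n → ℝ := fun θ' =>
        (∑ l, (θ' ⟨i, h⟩).1 j l * reluNet κ n θ' z i l) + (θ' ⟨i, h⟩).2 j with hp
      have hpd : DifferentiableAt ℝ p θ :=
        (DifferentiableAt.fun_sum fun l _ => (hWd l).mul (IH l)).add hbd
      have hpc : Continuous p :=
        (continuous_finset_sum _ fun l _ =>
          ((continuous_apply l).comp ((continuous_apply j).comp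
            (continuous_fst.comp (continuous_apply (⟨i, h⟩ : Fin n))))).mul
          (continuous_reluNet_param z i l)).add
          ((continuous_apply j).comp (continuous_snd.comp (continuous_apply (⟨i, h⟩ : Fin n))))
      have hfun : (fun θ' : NNParams κ n => reluNet κ n θ' z (i + 1) j) =
          fun θ' => if i + 2 ≤ n then max 0 (p θ') else p θ' := by
        funext θ'
        rw [reluNet_succ _ _ h]
      rw [hfun]
      by_cases h2 : i + 2 ≤ n
      · simp only [h2, if_true]
        have hne : p θ ≠ 0 := hz i h h2 j
        rcases hne.lt_or_gt with hneg | hpos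
        · have hev : ∀ᶠ θ' in nhds θ, p θ' < 0 :=
            (hpc.continuousAt).eventually_lt continuousAt_const hneg
          have heq : (fun θ' : NNParams κ n => max 0 (p θ')) =ᶠ[nhds θ] fun _ => (0:ℝ) := by
            filter_upwards [hev] with θ' hθ' using max_eq_left hθ'.le
          exact (differentiableAt_const (0:ℝ)).congr_of_eventuallyEq heq
        · have hev : ∀ᶠ θ' in nhds θ, 0 < p θ' :=
            (continuousAt_const).eventually_lt hpc.continuousAt hpos
          have heq : (fun θ' : NNParams κ n => max 0 (p θ')) =ᶠ[nhds θ] p := by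
            filter_upwards [hev] with θ' hθ' using max_eq_right hθ'.le
          exact hpd.congr_of_eventuallyEq heq
      · simp only [h2, if_false]
        exact hpd
    · have hfun : (fun θ' : NNParams κ n => reluNet κ n θ' z (i + 1) j) = fun _ => (0:ℝ) := by
        funext θ'
        rw [reluNet_succ_of_ge _ _ h]
      rw [hfun]
      exact differentiableAt_const _
end lemmas4

/-- Squared-error loss `f(θ,z) = ‖x_n(θ,z) − f̂(z)‖²` of the ReLU network. -/
def reluLoss (κ : ℕ → ℕ) (n : ℕ) (fhat : (Fin (κ 0) → ℝ) → (Fin (κ n) → ℝ))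
    (θ : NNParams κ n) (z : Fin (κ 0) → ℝ) : ℝ :=
  ∑ j, (reluNet κ n θ z n j - fhat z j) ^ 2

/-- The standard Gaussian measure on `ℝ^d` (i.i.d. `N(0,1)` coordinates). -/
def stdGaussian (d : ℕ) : Measure (Fin d → ℝ) :=
  Measure.pi fun _ => ProbabilityTheory.gaussianReal 0 1

/-- `θ` gives a.e. nonzero hidden-layer preactivations: for a.e. input `z`, every
hidden-layer preactivation `W_i^j x_{i-1} + b_i^j` is nonzero (so that `∇_θ f(θ,z)`
exists for a.e. `z`). -/
def NonzeroPreact (κ : ℕ → ℕ) (n : ℕ) (θ : NNParams κ n) : Prop :=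
  ∀ᵐ z ∂(stdGaussian (κ 0)), ∀ (i : ℕ) (h : i < n), i + 2 ≤ n →
    ∀ j : Fin (κ (i + 1)),
      (∑ l, (θ ⟨i, h⟩).1 j l * reluNet κ n θ z i l) + (θ ⟨i, h⟩).2 j ≠ 0


section gaussian

open ProbabilityTheory

lemma stdGaussian_map_eval (d : ℕ) (k : Fin d) :
    (stdGaussian d).map (Function.eval k) = gaussianReal 0 1 := by
  ext s hs
  rw [_root_.stdGaussian, Measure.map_apply (measurable_pi_apply k) hs]
  have hpre : Function.eval k ⁻¹' s =
      Set.pi Set.univ (Function.update (fun _ : Fin d => (Set.univ : Set ℝ)) k s) :=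
    Set.eval_preimage
  rw [hpre, Measure.pi_pi]
  rw [Finset.prod_eq_single k (fun i _ hik => by
    rw [Function.update_of_ne hik]; exact measure_univ) (by simp)]
  rw [Function.update_self]

lemma integrable_pow4_gaussianReal :
    Integrable (fun x : ℝ => x ^ 4) (gaussianReal 0 1) := by
  rw [gaussianReal_of_var_ne_zero 0 one_ne_zero,
    integrable_withDensity_iff (measurable_gaussianPDF 0 1)
      (MeasureTheory.ae_of_all _ fun x => ENNReal.ofReal_lt_top)]
  have heq : (fun x : ℝ => x ^ 4 * (gaussianPDF 0 1 x).toReal) =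
      fun x : ℝ => x ^ 4 * gaussianPDFReal 0 1 x := by
    funext x
    rw [gaussianPDF, ENNReal.toReal_ofReal (gaussianPDFReal_nonneg 0 1 x)]
  rw [heq]
  have hmaj : Integrable (fun x : ℝ =>
      64 * ((Real.sqrt (2 * Real.pi))⁻¹ * Real.exp (-(1/4) * x ^ 2))) :=
    ((integrable_exp_neg_mul_sq (by norm_num : (0:ℝ) < 1/4)).const_mul _).const_mul 64
  refine hmaj.mono' ((measurable_id.pow_const 4).mul
    (measurable_gaussianPDFReal 0 1)).aestronglyMeasurable (MeasureTheory.ae_of_all _ fun x => ?_)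
  have hpdf : gaussianPDFReal 0 1 x =
      (Real.sqrt (2 * Real.pi))⁻¹ * Real.exp (-x ^ 2 / 2) := by
    simp [gaussianPDFReal]
  have hc : (0:ℝ) < (Real.sqrt (2 * Real.pi))⁻¹ := by
    rw [inv_pos]
    apply Real.sqrt_pos.2
    positivity
  rw [Real.norm_eq_abs, hpdf]
  have h4 : x ^ 4 ≤ 64 * Real.exp ((1/4) * x ^ 2) := by
    have h1 : x ^ 2 / 8 + 1 ≤ Real.exp (x ^ 2 / 8) := Real.add_one_le_exp _
    have h2 : Real.exp ((1/4) * x ^ 2) = Real.exp (x ^ 2 / 8) * Real.exp (x ^ 2 / 8) := by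
      rw [← Real.exp_add]; ring_nf
    nlinarith [sq_nonneg x, sq_nonneg (x ^ 2)]
  have habs : |x ^ 4 * ((Real.sqrt (2 * Real.pi))⁻¹ * Real.exp (-x ^ 2 / 2))| =
      x ^ 4 * ((Real.sqrt (2 * Real.pi))⁻¹ * Real.exp (-x ^ 2 / 2)) := by
    apply abs_of_nonneg
    positivity
  rw [habs]
  have hkey : x ^ 4 * Real.exp (-x ^ 2 / 2) ≤ 64 * Real.exp (-(1/4) * x ^ 2) := by
    have h3 : Real.exp ((1/4) * x ^ 2) * Real.exp (-x ^ 2 / 2) =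
        Real.exp (-(1/4) * x ^ 2) := by
      rw [← Real.exp_add]; ring_nf
    calc x ^ 4 * Real.exp (-x ^ 2 / 2)
        ≤ 64 * Real.exp ((1/4) * x ^ 2) * Real.exp (-x ^ 2 / 2) :=
          mul_le_mul_of_nonneg_right h4 (Real.exp_pos _).le
      _ = 64 * Real.exp (-(1/4) * x ^ 2) := by rw [mul_assoc, h3]
  calc x ^ 4 * ((Real.sqrt (2 * Real.pi))⁻¹ * Real.exp (-x ^ 2 / 2))
      = (Real.sqrt (2 * Real.pi))⁻¹ * (x ^ 4 * Real.exp (-x ^ 2 / 2)) := by ring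
    _ ≤ (Real.sqrt (2 * Real.pi))⁻¹ * (64 * Real.exp (-(1/4) * x ^ 2)) :=
        mul_le_mul_of_nonneg_left hkey hc.le
    _ = 64 * ((Real.sqrt (2 * Real.pi))⁻¹ * Real.exp (-(1/4) * x ^ 2)) := by ring

lemma integrable_pow4_stdGaussian (d : ℕ) (k : Fin d) :
    Integrable (fun z : Fin d → ℝ => (z k) ^ 4) (stdGaussian d) := by
  have mp : MeasurePreserving (Function.eval k) (stdGaussian d) (gaussianReal 0 1) :=
    ⟨measurable_pi_apply k, stdGaussian_map_eval d k⟩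
  exact (mp.integrable_comp (measurable_id.pow_const 4).aestronglyMeasurable).2
    integrable_pow4_gaussianReal

end gaussian

section main
variable {κ : ℕ → ℕ} {n : ℕ}

lemma measurable_reluLoss_z (fhat : (Fin (κ 0) → ℝ) → (Fin (κ n) → ℝ))
    (hfhat : Measurable fhat) (θ₀ : NNParams κ n) :
    Measurable (fun z => reluLoss κ n fhat θ₀ z) := by
  unfold reluLoss
  exact Finset.measurable_sum _ fun j _ =>
    ((continuous_reluNet_input θ₀ n j).measurable.sub
      ((measurable_pi_apply j).comp hfhat)).pow_const 2

lemma clm_eq_sum_coord {E : Type*} [NormedAddCommGroup E] [NormedSpace ℝ E]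
    [FiniteDimensional ℝ E] (L : E →L[ℝ] ℝ) :
    L = ∑ v : Module.Basis.ofVectorSpaceIndex ℝ E,
      L ((Module.Basis.ofVectorSpace ℝ E) v) •
        LinearMap.toContinuousLinearMap ((Module.Basis.ofVectorSpace ℝ E).coord v) := by
  ext x
  rw [ContinuousLinearMap.sum_apply]
  conv_lhs => rw [← (Module.Basis.ofVectorSpace ℝ E).sum_repr x, map_sum]
  refine Finset.sum_congr rfl fun v _ => ?_
  rw [_root_.map_smul]
  simp [Module.Basis.coord_apply, mul_comm]

instance stdGaussian_isProbabilityMeasure (d : ℕ) :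
    IsProbabilityMeasure (stdGaussian d) := by
  unfold stdGaussian
  infer_instance
end main

set_option maxHeartbeats 1000000

/-- **Finite second moment of the gradient estimator for the ReLU network
(Theorem 2.5, item 2).**  For every `θ ∈ Θ`, `E_z[‖∇_θ f(θ,z)‖²] < ∞`, where
`∇_θ f(θ,z)` is the derivative of the loss with respect to all weights and biases for
fixed input `z` (defined for a.e. `z`). -/
theorem stmt_12 (κ : ℕ → ℕ) (n : ℕ) (hn : 1 ≤ n)
    (fhat : (Fin (κ 0) → ℝ) → (Fin (κ n) → ℝ)) (hfhat : Measurable fhat)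
    (hmom0 : Integrable (fun z => ∑ j, (fhat z j) ^ 2) (stdGaussian (κ 0)))
    (hmom1 : ∀ k : Fin (κ 0),
      Integrable (fun z => (∑ j, (fhat z j) ^ 2) * |z k|) (stdGaussian (κ 0)))
    (hmom2 : ∀ k : Fin (κ 0),
      Integrable (fun z => (∑ j, (fhat z j) ^ 2) * |z k| ^ 2) (stdGaussian (κ 0)))
    (hmom3 : ∀ k : Fin (κ 0),
      Integrable (fun z => Real.sqrt (∑ j, (fhat z j) ^ 2) * |z k| ^ 2) (stdGaussian (κ 0)))
    (hmom4 : ∀ k : Fin (κ 0),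
      Integrable (fun z => (∑ j, (fhat z j) ^ 2) * |z k| ^ 3) (stdGaussian (κ 0)))
    (Θ : Set (NNParams κ n)) (hΘb : Bornology.IsBounded Θ) (hΘc : Convex ℝ Θ)
    (hΘd : ∀ θ ∈ Θ, NonzeroPreact κ n θ) :
    ∀ θ ∈ Θ,
      Integrable (fun z => ‖fderiv ℝ (fun θ' => reluLoss κ n fhat θ' z) θ‖ ^ 2)
        (stdGaussian (κ 0)) := by

  intro θ hθ
  -- abbreviation for the loss as a function of the parameter
  have hdiff : ∀ᵐ z ∂(stdGaussian (κ 0)),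
      DifferentiableAt ℝ (fun θ' => reluLoss κ n fhat θ' z) θ := by
    filter_upwards [hΘd θ hθ] with z hz
    unfold reluLoss
    exact DifferentiableAt.fun_sum fun j _ =>
      ((differentiableAt_reluNet θ z hz n j).sub (differentiableAt_const _)).pow 2
  -- measurability of the squared norm of the derivative
  have hAESM : AEStronglyMeasurable
      (fun z => ‖fderiv ℝ (fun θ' => reluLoss κ n fhat θ' z) θ‖ ^ 2) (stdGaussian (κ 0)) := by
    set b := Module.Basis.ofVectorSpace ℝ (NNParams κ n) with hb
    have hDmeas : ∀ v : Module.Basis.ofVectorSpaceIndex ℝ (NNParams κ n),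
        AEMeasurable (fun z => fderiv ℝ (fun θ' => reluLoss κ n fhat θ' z) θ (b v))
          (stdGaussian (κ 0)) := by
      intro v
      apply aemeasurable_of_tendsto_metrizable_ae'
        (f := fun (m : ℕ) z => ((m : ℝ) + 1) *
          (reluLoss κ n fhat (θ + ((m : ℝ) + 1)⁻¹ • b v) z - reluLoss κ n fhat θ z))
      · intro m
        exact (((measurable_reluLoss_z fhat hfhat _).sub
          (measurable_reluLoss_z fhat hfhat _)).const_mul _).aemeasurable
      · filter_upwards [hdiff] with z hz
        have hc : Filter.Tendsto (fun m : ℕ => ‖(m : ℝ) + 1‖) Filter.atTop Filter.atTop := by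
          have h1 : Filter.Tendsto (fun m : ℕ => (m : ℝ) + 1) Filter.atTop Filter.atTop :=
            Filter.tendsto_atTop_add_const_right _ 1 tendsto_natCast_atTop_atTop
          refine h1.congr fun m => ?_
          rw [Real.norm_eq_abs, abs_of_nonneg (by positivity)]
        have hlim := hz.hasFDerivAt.lim (b v) (c := fun m : ℕ => (m : ℝ) + 1) hc
        simpa [smul_eq_mul] using hlim
    have hvec : AEMeasurable
        (fun z => fun v : Module.Basis.ofVectorSpaceIndex ℝ (NNParams κ n) =>
          fderiv ℝ (fun θ' => reluLoss κ n fhat θ' z) θ (b v)) (stdGaussian (κ 0)) := by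
      choose Dm hDm hDeq using hDmeas
      refine ⟨fun z v => Dm v z, measurable_pi_lambda _ hDm, ?_⟩
      have hall : ∀ᵐ z ∂(stdGaussian (κ 0)), ∀ v,
          fderiv ℝ (fun θ' => reluLoss κ n fhat θ' z) θ (b v) = Dm v z :=
        (MeasureTheory.ae_all_iff).2 fun v => hDeq v
      filter_upwards [hall] with z hz
      funext v
      exact hz v
    have hcont : Continuous (fun a : Module.Basis.ofVectorSpaceIndex ℝ (NNParams κ n) → ℝ =>
        ‖∑ v, a v • LinearMap.toContinuousLinearMap (b.coord v)‖ ^ 2) :=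
      ((continuous_finset_sum _ fun v _ =>
        (continuous_apply v).smul continuous_const).norm).pow 2
    have hcomp := hcont.measurable.comp_aemeasurable hvec
    refine (hcomp.congr (Filter.EventuallyEq.of_eq ?_)).aestronglyMeasurable
    funext z
    simp only [Function.comp_apply]
    rw [← clm_eq_sum_coord (fderiv ℝ (fun θ' => reluLoss κ n fhat θ' z) θ)]
  -- Lipschitz bound on the derivative
  obtain ⟨A, hA0, hA⟩ := reluNet_bound θ n
  obtain ⟨L, hL0, hL⟩ := reluNet_lip θ n
  set S : (Fin (κ 0) → ℝ) → ℝ := fun z => Real.sqrt (∑ j, (fhat z j) ^ 2) with hSdef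
  have hS0 : ∀ z, 0 ≤ S z := fun z => Real.sqrt_nonneg _
  have hSsq : ∀ z, S z ^ 2 = ∑ j, (fhat z j) ^ 2 := fun z =>
    Real.sq_sqrt (by positivity)
  have hcj : ∀ z j, |fhat z j| ≤ S z := by
    intro z j
    rw [hSdef, ← Real.sqrt_sq_eq_abs]
    exact Real.sqrt_le_sqrt (Finset.single_le_sum
      (f := fun j => (fhat z j) ^ 2) (fun j _ => sq_nonneg _) (Finset.mem_univ j))
  set c1 : ℝ := 2 * (κ n : ℝ) * L with hc1
  have hc10 : 0 ≤ c1 := by positivity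
  set K : (Fin (κ 0) → ℝ) → ℝ :=
    fun z => c1 * ((1 + ‖z‖) * (A * (1 + ‖z‖) + S z)) with hK
  have hK0 : ∀ z, 0 ≤ K z := by
    intro z
    have h1 : (0:ℝ) ≤ 1 + ‖z‖ := by positivity
    have h2 : (0:ℝ) ≤ A * (1 + ‖z‖) + S z := by
      have := hS0 z
      nlinarith
    positivity
  have hKb : ∀ z, ‖fderiv ℝ (fun θ' => reluLoss κ n fhat θ' z) θ‖ ≤ K z := by
    intro z
    apply norm_fderiv_le_of_lip' ℝ (hK0 z)
    filter_upwards [Metric.closedBall_mem_nhds θ one_pos] with θ' hθ'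
    have hθmem : θ ∈ Metric.closedBall θ 1 := Metric.mem_closedBall_self zero_le_one
    have hz1 : (0:ℝ) ≤ 1 + ‖z‖ := by positivity
    have hterm : ∀ j : Fin (κ n),
        |(reluNet κ n θ' z n j - fhat z j) ^ 2 - (reluNet κ n θ z n j - fhat z j) ^ 2| ≤
          (L * (1 + ‖z‖) * ‖θ' - θ‖) * (2 * (A * (1 + ‖z‖) + S z)) := by
      intro j
      have e : (reluNet κ n θ' z n j - fhat z j) ^ 2 - (reluNet κ n θ z n j - fhat z j) ^ 2 =
          (reluNet κ n θ' z n j - reluNet κ n θ z n j) *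
            ((reluNet κ n θ' z n j - fhat z j) + (reluNet κ n θ z n j - fhat z j)) := by
        ring
      rw [e, abs_mul]
      have hfac2 : |(reluNet κ n θ' z n j - fhat z j) + (reluNet κ n θ z n j - fhat z j)| ≤
          2 * (A * (1 + ‖z‖) + S z) := by
        have b1 := hA z θ' hθ' j
        have b2 := hA z θ hθmem j
        have b3 := hcj z j
        have t1 : |reluNet κ n θ' z n j - fhat z j| ≤ A * (1 + ‖z‖) + S z := by
          calc |reluNet κ n θ' z n j - fhat z j| ≤ |reluNet κ n θ' z n j| + |fhat z j| :=
                abs_sub _ _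
            _ ≤ A * (1 + ‖z‖) + S z := add_le_add b1 b3
        have t2 : |reluNet κ n θ z n j - fhat z j| ≤ A * (1 + ‖z‖) + S z := by
          calc |reluNet κ n θ z n j - fhat z j| ≤ |reluNet κ n θ z n j| + |fhat z j| :=
                abs_sub _ _
            _ ≤ A * (1 + ‖z‖) + S z := add_le_add b2 b3
        calc _ ≤ _ := abs_add_le _ _
          _ ≤ 2 * (A * (1 + ‖z‖) + S z) := by linarith
      exact mul_le_mul (hL z θ' hθ' θ hθmem j) hfac2 (abs_nonneg _)
        (by positivity)
    have hsum : ‖reluLoss κ n fhat θ' z - reluLoss κ n fhat θ z‖ ≤ K z * ‖θ' - θ‖ := by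
      unfold reluLoss
      rw [Real.norm_eq_abs, ← Finset.sum_sub_distrib]
      calc |∑ j, ((reluNet κ n θ' z n j - fhat z j) ^ 2 -
              (reluNet κ n θ z n j - fhat z j) ^ 2)|
          ≤ ∑ j, |(reluNet κ n θ' z n j - fhat z j) ^ 2 -
              (reluNet κ n θ z n j - fhat z j) ^ 2| := Finset.abs_sum_le_sum_abs _ _
        _ ≤ ∑ _j : Fin (κ n), (L * (1 + ‖z‖) * ‖θ' - θ‖) * (2 * (A * (1 + ‖z‖) + S z)) :=
            Finset.sum_le_sum fun j _ => hterm j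
        _ = (κ n : ℝ) * ((L * (1 + ‖z‖) * ‖θ' - θ‖) * (2 * (A * (1 + ‖z‖) + S z))) := by
            rw [Finset.sum_const, Finset.card_univ, Fintype.card_fin, nsmul_eq_mul]
        _ = K z * ‖θ' - θ‖ := by rw [hK, hc1]; ring
    exact hsum
  -- integrable majorant
  set G : (Fin (κ 0) → ℝ) → ℝ := fun z =>
    (16 * c1 ^ 2 * A ^ 2) * (1 + (κ 0 : ℝ) * ∑ k, (z k) ^ 4) +
      ((4 * c1 ^ 2) * (∑ j, (fhat z j) ^ 2) +
        (4 * c1 ^ 2) * (∑ k, (∑ j, (fhat z j) ^ 2) * |z k| ^ 2)) with hG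
  have hGint : Integrable G (stdGaussian (κ 0)) := by
    have h1 : Integrable (fun z : Fin (κ 0) → ℝ => 1 + (κ 0 : ℝ) * ∑ k, (z k) ^ 4)
        (stdGaussian (κ 0)) :=
      (integrable_const 1).add
        ((integrable_finset_sum _ fun k _ => integrable_pow4_stdGaussian _ k).const_mul _)
    have h2 : Integrable (fun z => ∑ k, (∑ j, (fhat z j) ^ 2) * |z k| ^ 2)
        (stdGaussian (κ 0)) := integrable_finset_sum _ fun k _ => hmom2 k
    exact (h1.const_mul _).add ((hmom0.const_mul _).add (h2.const_mul _))
  refine hGint.mono' hAESM (MeasureTheory.ae_of_all _ fun z => ?_)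
  have hnormsq : ‖‖fderiv ℝ (fun θ' => reluLoss κ n fhat θ' z) θ‖ ^ 2‖ =
      ‖fderiv ℝ (fun θ' => reluLoss κ n fhat θ' z) θ‖ ^ 2 := by
    rw [Real.norm_eq_abs, abs_of_nonneg (by positivity)]
  rw [hnormsq]
  have hKsq : ‖fderiv ℝ (fun θ' => reluLoss κ n fhat θ' z) θ‖ ^ 2 ≤ K z ^ 2 :=
    pow_le_pow_left₀ (norm_nonneg _) (hKb z) 2
  refine hKsq.trans ?_
  -- algebra: K z ^ 2 ≤ G z
  show (c1 * ((1 + ‖z‖) * (A * (1 + ‖z‖) + S z))) ^ 2 ≤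
      16 * c1 ^ 2 * A ^ 2 * (1 + (κ 0 : ℝ) * ∑ k, (z k) ^ 4) +
        (4 * c1 ^ 2 * ∑ j, (fhat z j) ^ 2 +
          4 * c1 ^ 2 * ∑ k, (∑ j, (fhat z j) ^ 2) * |z k| ^ 2)
  rw [← hSsq z]
  have hsum2 : (∑ k, S z ^ 2 * |z k| ^ 2) = S z ^ 2 * ∑ k, (z k) ^ 2 := by
    rw [← Finset.mul_sum]
    congr 1
    exact Finset.sum_congr rfl fun k _ => sq_abs (z k)
  rw [hsum2]
  set x : ℝ := ‖z‖ with hx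
  have hx0 : 0 ≤ x := norm_nonneg _
  set q : ℝ := ∑ k, (z k) ^ 2 with hq
  set r : ℝ := ∑ k, (z k) ^ 4 with hr
  set s : ℝ := S z with hs
  have hs0 : 0 ≤ s := hS0 z
  have hq0 : 0 ≤ q := by rw [hq]; positivity
  have hr0 : 0 ≤ r := by rw [hr]; positivity
  have hκ0 : (0:ℝ) ≤ (κ 0 : ℝ) := Nat.cast_nonneg _
  have hxq : x ^ 2 ≤ q := by
    have hzk : ∀ k, |z k| ≤ Real.sqrt q := by
      intro k
      rw [← Real.sqrt_sq_eq_abs]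
      exact Real.sqrt_le_sqrt (Finset.single_le_sum
        (f := fun k => (z k) ^ 2) (fun k _ => sq_nonneg _) (Finset.mem_univ k))
    have hxs : x ≤ Real.sqrt q := by
      rw [hx]
      exact (pi_norm_le_iff_of_nonneg (Real.sqrt_nonneg _)).2 fun k => hzk k
    calc x ^ 2 ≤ Real.sqrt q ^ 2 := pow_le_pow_left₀ hx0 hxs 2
      _ = q := Real.sq_sqrt hq0
  have hqr : q ^ 2 ≤ (κ 0 : ℝ) * r := by
    have h := sq_sum_le_card_mul_sum_sq (s := (Finset.univ : Finset (Fin (κ 0))))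
      (f := fun k => (z k) ^ 2)
    rw [hq, hr]
    simpa [← pow_mul] using h
  have h1 : (1 + x) ^ 2 ≤ 2 + 2 * q := by nlinarith [sq_nonneg (x - 1), hxq]
  have h2 : (1 + x) ^ 4 ≤ 8 + 8 * ((κ 0 : ℝ) * r) := by
    have h2a : ((1 + x) ^ 2) ^ 2 ≤ (2 + 2 * q) ^ 2 := pow_le_pow_left₀ (by positivity) h1 2
    nlinarith [sq_nonneg (q - 1)]
  have h3 : ((1 + x) * (A * (1 + x) + s)) ^ 2 ≤
      2 * A ^ 2 * (1 + x) ^ 4 + 2 * (1 + x) ^ 2 * s ^ 2 := by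
    nlinarith [sq_nonneg (A * (1 + x) ^ 2 - (1 + x) * s)]
  have h4 : 2 * (1 + x) ^ 2 * s ^ 2 ≤ (4 + 4 * q) * s ^ 2 := by
    have := mul_le_mul_of_nonneg_right h1 (sq_nonneg s)
    nlinarith
  have h5 : 2 * A ^ 2 * (1 + x) ^ 4 ≤ 2 * A ^ 2 * (8 + 8 * ((κ 0 : ℝ) * r)) :=
    mul_le_mul_of_nonneg_left h2 (by positivity)
  have hmain : ((1 + x) * (A * (1 + x) + s)) ^ 2 ≤
      16 * A ^ 2 * (1 + (κ 0 : ℝ) * r) + (4 * s ^ 2 + 4 * (s ^ 2 * q)) := by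
    nlinarith
  calc (c1 * ((1 + x) * (A * (1 + x) + s))) ^ 2
      = c1 ^ 2 * ((1 + x) * (A * (1 + x) + s)) ^ 2 := by ring
    _ ≤ c1 ^ 2 * (16 * A ^ 2 * (1 + (κ 0 : ℝ) * r) + (4 * s ^ 2 + 4 * (s ^ 2 * q))) :=
        mul_le_mul_of_nonneg_left hmain (by positivity)
    _ = 16 * c1 ^ 2 * A ^ 2 * (1 + (κ 0 : ℝ) * r) +
        (4 * c1 ^ 2 * s ^ 2 + 4 * c1 ^ 2 * (s ^ 2 * q)) := by ring
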